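/- Let γ > 0, C > 0 and u*, λ* ∈ ℝ^m, and suppose u* is a global minimizer over v ∈ ℝ^m of the function v ↦ C‖v₊‖₀ + (1/(2γ))‖v − (u* − γλ*)‖². Then for every index i ∈ {1,…,m}, either λ*_i = 0, or both u*_i = 0 and −√(2C/γ) ≤ λ*_i < 0 hold. In particular, λ*_i ≠ 0 implies u*_i = 0. -/

import Mathlib

/-- `‖v₊‖₀`: the number of strictly positive components of `v`, as a real number. -/
noncomputable def l0pos {m : ℕ} (v : Fin m → ℝ) : ℝ :=
  ((Finset.univ.filter (fun i => 0 < v i)).card : ℝ)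

lemma l0pos_eq_sum {m : ℕ} (v : Fin m → ℝ) :
    l0pos v = ∑ i, (if 0 < v i then (1:ℝ) else 0) := by
  rw [l0pos, Finset.card_filter]
  push_cast
  simp

/-- If `u*` satisfies the proximal fixed-point condition `u* = prox_{γC‖(·)₊‖₀}(u* − γλ*)`,
then componentwise either `λ*_i = 0`, or `u*_i = 0` and `−√(2C/γ) ≤ λ*_i < 0`; in particular
`λ*_i ≠ 0` implies `u*_i = 0`. -/
theorem stmt_10 (m : ℕ) (γ C : ℝ) (hγ : 0 < γ) (hC : 0 < C)
    (ustar lamstar : Fin m → ℝ)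
    (hmin : ∀ v : Fin m → ℝ,
      C * l0pos ustar + (1 / (2 * γ)) * ∑ i, (ustar i - (ustar i - γ * lamstar i)) ^ 2 ≤
      C * l0pos v + (1 / (2 * γ)) * ∑ i, (v i - (ustar i - γ * lamstar i)) ^ 2) :
    (∀ i : Fin m, lamstar i = 0 ∨
      (ustar i = 0 ∧ -Real.sqrt (2 * C / γ) ≤ lamstar i ∧ lamstar i < 0)) ∧
    (∀ i : Fin m, lamstar i ≠ 0 → ustar i = 0) := by
  have hc : 0 < 1 / (2 * γ) := by positivity
  -- key pointwise inequality
  have key : ∀ (i : Fin m) (t : ℝ),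
      C * (if 0 < ustar i then (1:ℝ) else 0) + (1/(2*γ)) * (γ * lamstar i)^2 ≤
      C * (if 0 < t then (1:ℝ) else 0) +
        (1/(2*γ)) * (t - (ustar i - γ * lamstar i))^2 := by
    intro i t
    have h := hmin (Function.update ustar i t)
    rw [l0pos_eq_sum, l0pos_eq_sum] at h
    have s1 : ∑ j, (if 0 < Function.update ustar i t j then (1:ℝ) else 0)
        = (if 0 < t then (1:ℝ) else 0) +
          ∑ j ∈ Finset.univ.erase i, (if 0 < ustar j then (1:ℝ) else 0) := by
      rw [← Finset.add_sum_erase _ _ (Finset.mem_univ i)]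
      congr 1
      · simp
      · exact Finset.sum_congr rfl fun j hj => by
          simp [Function.update_of_ne (Finset.ne_of_mem_erase hj)]
    have s2 : ∑ j, (if 0 < ustar j then (1:ℝ) else 0)
        = (if 0 < ustar i then (1:ℝ) else 0) +
          ∑ j ∈ Finset.univ.erase i, (if 0 < ustar j then (1:ℝ) else 0) :=
      (Finset.add_sum_erase _ _ (Finset.mem_univ i)).symm
    have s3 : ∑ j, (Function.update ustar i t j - (ustar j - γ * lamstar j))^2
        = (t - (ustar i - γ * lamstar i))^2 +
          ∑ j ∈ Finset.univ.erase i, (ustar j - (ustar j - γ * lamstar j))^2 := by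
      rw [← Finset.add_sum_erase _ _ (Finset.mem_univ i)]
      congr 1
      · simp
      · exact Finset.sum_congr rfl fun j hj => by
          simp [Function.update_of_ne (Finset.ne_of_mem_erase hj)]
    have s4 : ∑ j, (ustar j - (ustar j - γ * lamstar j))^2
        = (γ * lamstar i)^2 +
          ∑ j ∈ Finset.univ.erase i, (ustar j - (ustar j - γ * lamstar j))^2 := by
      rw [← Finset.add_sum_erase _ _ (Finset.mem_univ i)]
      congr 1
      ring
    rw [s1, s3, s4] at h
    rw [s2] at h
    set K := ∑ j ∈ Finset.univ.erase i, (if 0 < ustar j then (1:ℝ) else 0)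
    set S := ∑ j ∈ Finset.univ.erase i, (ustar j - (ustar j - γ * lamstar j))^2
    nlinarith [h]
  -- componentwise analysis
  have main : ∀ i : Fin m, lamstar i ≠ 0 →
      ustar i = 0 ∧ -Real.sqrt (2 * C / γ) ≤ lamstar i ∧ lamstar i < 0 := by
    intro i hne
    have hl2 : 0 < (γ * lamstar i)^2 := by positivity
    have hpos : 0 < γ⁻¹ * 2⁻¹ * (γ * lamstar i)^2 := by positivity
    -- step 1: take t = ustar i - γ * lamstar i
    have k1 := key i (ustar i - γ * lamstar i)
    simp only [sub_self, ne_eq, OfNat.ofNat_ne_zero, not_false_eq_true, zero_pow] at k1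
    -- case analysis on the indicators
    have hcases : ¬ (0 < ustar i) ∧ 0 < ustar i - γ * lamstar i := by
      by_cases h1 : 0 < ustar i <;> by_cases h2 : 0 < ustar i - γ * lamstar i <;>
        simp [h1, h2] at k1 ⊢ <;> linarith
    obtain ⟨hu_le, ht_pos⟩ := hcases
    push_neg at hu_le
    have hbound : (1/(2*γ)) * (γ * lamstar i)^2 ≤ C := by
      simp [not_lt.mpr hu_le, ht_pos] at k1
      have hrw : γ⁻¹ * 2⁻¹ * (γ * lamstar i)^2 = (1/(2*γ)) * (γ * lamstar i)^2 := by
        ring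
      linarith [k1, hrw.symm.le, hrw.le]
    -- λ_i < 0
    have hgl : γ * lamstar i < 0 := by linarith
    have hlneg : lamstar i < 0 := by
      by_contra h
      push_neg at h
      nlinarith [mul_nonneg hγ.le h]
    -- u_i = 0
    have hu0 : ustar i = 0 := by
      by_contra hne0
      have hult : ustar i < 0 := lt_of_le_of_ne hu_le hne0
      have k2 := key i 0
      simp [not_lt.mpr hu_le] at k2
      have h2γ : (0:ℝ) < γ⁻¹ * 2⁻¹ := by positivity
      have k2' : (γ * lamstar i)^2 ≤ (γ * lamstar i - ustar i)^2 :=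
        (mul_le_mul_iff_right₀ h2γ).mp k2
      nlinarith [k2', mul_neg_of_neg_of_pos hult
        (show 0 < ustar i - 2*(γ*lamstar i) by linarith)]
    -- bound: λ_i² ≤ 2C/γ
    have hbrw : (1/(2*γ)) * (γ * lamstar i)^2 = (γ/2) * (lamstar i)^2 := by
      field_simp
    have hb2 : (γ/2) * (lamstar i)^2 ≤ C := by rw [← hbrw]; exact hbound
    have hsq : lamstar i ^ 2 ≤ 2 * C / γ := by
      rw [le_div_iff₀ hγ]
      nlinarith
    have habs : |lamstar i| ≤ Real.sqrt (2 * C / γ) := by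
      have h' := Real.sqrt_le_sqrt hsq
      rwa [Real.sqrt_sq_eq_abs] at h'
    exact ⟨hu0, by linarith [neg_abs_le (lamstar i), neg_le_neg habs], hlneg⟩
  constructor
  · intro i
    by_cases h : lamstar i = 0
    · exact Or.inl h
    · exact Or.inr (main i h)
  · intro i h
    exact (main i h).1
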